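/- Every non-trivial cutset in 𝒫(ℕ) contains a chain (under inclusion) of cardinality 2^{ℵ₀} as well as an antichain of cardinality 2^{ℵ₀}. -/

import Mathlib

open Cardinal Set

namespace CutsetAux

/-- Key lemma: given a cutset `C` avoiding `∅` and `univ`, for every infinite,
co-infinite `B` there is `X ∈ C` that is `B` minus a finite set or `B` plus a finite set. -/
lemma exists_near (C : Set (Set ℕ))
    (hcut : ∀ M : Set (Set ℕ), IsMaxChain (· ⊆ ·) M → (C ∩ M).Nonempty)
    (huniv : Set.univ ∉ C) (hempty : ∅ ∉ C)
    (B : Set ℕ) (hBi : B.Infinite) (hBc : Bᶜ.Infinite) :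
    ∃ X ∈ C, ∃ F : Finset ℕ, X = B \ ↑F ∨ X = B ∪ ↑F := by
  classical
  obtain ⟨e, he⟩ := (Set.to_countable B).exists_eq_range hBi.nonempty
  obtain ⟨g, hg⟩ := (Set.to_countable Bᶜ).exists_eq_range hBc.nonempty
  set Lo : ℕ → Set ℕ := fun n => B \ (e '' Set.Iio n) with hLo
  set Hi : ℕ → Set ℕ := fun n => B ∪ (g '' Set.Iio n) with hHi
  set M : Set (Set ℕ) := insert ∅ (insert Set.univ (Set.range Lo ∪ Set.range Hi)) with hM
  have hLoB : ∀ n, Lo n ⊆ B := fun n => diff_subset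
  have hBHi : ∀ n, B ⊆ Hi n := fun n => subset_union_left
  have hLo0 : Lo 0 = B := by
    ext x; simp [hLo, Nat.not_lt_zero]
  have hHi0 : Hi 0 = B := by
    ext x; simp [hHi, Nat.not_lt_zero]
  have hLoAnti : ∀ {n m : ℕ}, n ≤ m → Lo m ⊆ Lo n := fun h =>
    diff_subset_diff_right (image_mono (Iio_subset_Iio h))
  have hHiMono : ∀ {n m : ℕ}, n ≤ m → Hi n ⊆ Hi m := fun h =>
    union_subset_union_right _ (image_mono (Iio_subset_Iio h))
  have hLoM : ∀ n, Lo n ∈ M := fun n =>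
    mem_insert_of_mem _ (mem_insert_of_mem _ (Or.inl ⟨n, rfl⟩))
  have hHiM : ∀ n, Hi n ∈ M := fun n =>
    mem_insert_of_mem _ (mem_insert_of_mem _ (Or.inr ⟨n, rfl⟩))
  have hBM : B ∈ M := hLo0 ▸ hLoM 0
  -- M is a chain
  have hchain : IsChain (· ⊆ ·) M := by
    intro S hS T hT _
    simp only [hM, Set.mem_insert_iff, Set.mem_union, Set.mem_range] at hS hT
    rcases hS with rfl | rfl | ⟨n, rfl⟩ | ⟨n, rfl⟩
    · exact Or.inl (empty_subset _)
    · exact Or.inr (subset_univ _)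
    all_goals rcases hT with rfl | rfl | ⟨m, rfl⟩ | ⟨m, rfl⟩
    · exact Or.inr (empty_subset _)
    · exact Or.inl (subset_univ _)
    · rcases le_total n m with h | h
      · exact Or.inr (hLoAnti h)
      · exact Or.inl (hLoAnti h)
    · exact Or.inl ((hLoB n).trans (hBHi m))
    · exact Or.inr (empty_subset _)
    · exact Or.inl (subset_univ _)
    · exact Or.inr ((hLoB m).trans (hBHi n))
    · rcases le_total n m with h | h
      · exact Or.inl (hHiMono h)
      · exact Or.inr (hHiMono h)
  -- one-step bounds
  have hLostep : ∀ j, Lo j ⊆ Lo (j + 1) ∪ {e j} := by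
    intro j x hx
    rcases eq_or_ne x (e j) with h | h
    · exact Or.inr h
    · refine Or.inl ⟨hx.1, ?_⟩
      rintro ⟨i, hi, hix⟩
      rcases Nat.lt_succ_iff_lt_or_eq.mp hi with hij | rfl
      · exact hx.2 ⟨i, hij, hix⟩
      · exact h hix.symm
  have hHistep : ∀ j, Hi (j + 1) ⊆ Hi j ∪ {g j} := by
    intro j x hx
    rcases hx with hx | ⟨i, hi, hix⟩
    · exact Or.inl (Or.inl hx)
    · rcases Nat.lt_succ_iff_lt_or_eq.mp hi with hij | rfl
      · exact Or.inl (Or.inr ⟨i, hij, hix⟩)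
      · exact Or.inr hix.symm
  -- any set comparable with everything in M lies in M
  have hmem : ∀ S : Set ℕ, (∀ T ∈ M, S ⊆ T ∨ T ⊆ S) → S ∈ M := by
    intro S hS
    by_cases hSlo : ∀ n, S ⊆ Lo n
    · have hSe : S = ∅ := by
        ext x
        simp only [mem_empty_iff_false, iff_false]
        intro hx
        have hxB : x ∈ B := (hLo0 ▸ hSlo 0) hx
        rw [he] at hxB
        obtain ⟨k, hk⟩ := hxB
        exact (hSlo (k + 1) hx).2 ⟨k, Nat.lt_succ_self k, hk⟩
      exact hSe ▸ mem_insert _ _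
    · push_neg at hSlo
      obtain ⟨n0, hn0⟩ := hSlo
      have hLoS : ∃ n, Lo n ⊆ S := ⟨n0, (hS (Lo n0) (hLoM n0)).resolve_left hn0⟩
      by_cases hShi : ∀ m, Hi m ⊆ S
      · have hSu : S = Set.univ := by
          ext x
          simp only [mem_univ, iff_true]
          by_cases hxB : x ∈ B
          · exact hShi 0 (Or.inl hxB)
          · have hxc : x ∈ Bᶜ := hxB
            rw [hg] at hxc
            obtain ⟨k, hk⟩ := hxc
            exact hShi (k + 1) (Or.inr ⟨k, Nat.lt_succ_self k, hk⟩)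
        exact hSu ▸ mem_insert_of_mem _ (mem_insert _ _)
      · push_neg at hShi
        obtain ⟨m0, hm0⟩ := hShi
        have hSHi : S ⊆ Hi m0 := (hS (Hi m0) (hHiM m0)).resolve_right hm0
        by_cases hBS : B ⊆ S
        · -- upper zone
          have hex : ∃ m, S ⊆ Hi m := ⟨m0, hSHi⟩
          cases hknat : Nat.find hex with
          | zero =>
            have h1 : S ⊆ Hi 0 := by rw [← hknat]; exact Nat.find_spec hex
            have : S = B := (hHi0 ▸ h1).antisymm hBS
            exact this ▸ hBM
          | succ j =>
            have hSj : ¬ S ⊆ Hi j := Nat.find_min hex (by rw [hknat]; exact Nat.lt_succ_self j)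
            have hjS : Hi j ⊆ S := (hS (Hi j) (hHiM j)).resolve_left hSj
            have hSj1 : S ⊆ Hi (j + 1) := by rw [← hknat]; exact Nat.find_spec hex
            by_cases hgj : g j ∈ S
            · have : S = Hi (j + 1) := by
                refine hSj1.antisymm fun x hx => ?_
                rcases hHistep j hx with h | h
                · exact hjS h
                · exact h ▸ hgj
              exact this ▸ hHiM (j + 1)
            · have : S = Hi j := by
                refine Subset.antisymm (fun x hx => ?_) hjS
                rcases hHistep j (hSj1 hx) with h | h
                · exact h
                · exact absurd (h ▸ hx) hgj
              exact this ▸ hHiM j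
        · -- lower zone
          have hSB : S ⊆ B := (hS B hBM).resolve_right hBS
          cases hknat : Nat.find hLoS with
          | zero =>
            have h1 : Lo 0 ⊆ S := by rw [← hknat]; exact Nat.find_spec hLoS
            exact absurd (hLo0 ▸ h1) hBS
          | succ j =>
            have hSj : ¬ Lo j ⊆ S := Nat.find_min hLoS (by rw [hknat]; exact Nat.lt_succ_self j)
            have hSLoj : S ⊆ Lo j := (hS (Lo j) (hLoM j)).resolve_right hSj
            have hj1S : Lo (j + 1) ⊆ S := by rw [← hknat]; exact Nat.find_spec hLoS
            by_cases hej : e j ∈ S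
            · have : S = Lo j := by
                refine hSLoj.antisymm fun x hx => ?_
                rcases hLostep j hx with h | h
                · exact hj1S h
                · exact h ▸ hej
              exact this ▸ hLoM j
            · have : S = Lo (j + 1) := by
                refine Subset.antisymm (fun x hx => ?_) hj1S
                have hxj := hSLoj hx
                refine ⟨hxj.1, ?_⟩
                rintro ⟨i, hi, hix⟩
                rcases Nat.lt_succ_iff_lt_or_eq.mp hi with hij | rfl
                · exact hxj.2 ⟨i, hij, hix⟩
                · exact hej (hix ▸ hx)
              exact this ▸ hLoM (j + 1)
  have hmax : IsMaxChain (· ⊆ ·) M := by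
    refine ⟨hchain, fun t ht hMt => hMt.antisymm fun x hx => ?_⟩
    refine hmem x fun T hT => ?_
    rcases eq_or_ne x T with rfl | hne
    · exact Or.inl subset_rfl
    · exact ht hx (hMt hT) hne
  obtain ⟨X, hXC, hXM⟩ := hcut M hmax
  simp only [hM, Set.mem_insert_iff, Set.mem_union, Set.mem_range] at hXM
  rcases hXM with rfl | rfl | ⟨n, rfl⟩ | ⟨n, rfl⟩
  · exact absurd hXC hempty
  · exact absurd hXC huniv
  · refine ⟨Lo n, hXC, ((Set.finite_Iio n).image e).toFinset, Or.inl ?_⟩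
    rw [Set.Finite.coe_toFinset]
  · refine ⟨Hi n, hXC, ((Set.finite_Iio n).image g).toFinset, Or.inr ?_⟩
    rw [Set.Finite.coe_toFinset]

/-- Pigeonhole: a set of size continuum mapped to a countable type has a fiber of size
continuum (uses König's theorem via `sum_lt_prod`). -/
lemma fiber_big {α β : Type} [Countable β] (hα : #α = 𝔠) (f : α → β) :
    ∃ b : β, 𝔠 ≤ #(f ⁻¹' {b}) := by
  by_contra hcon
  push_neg at hcon
  have h1 : #α = Cardinal.sum fun b : β => #(f ⁻¹' {b}) := by
    rw [← Cardinal.mk_sigma]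
    exact (Cardinal.mk_congr (Equiv.sigmaFiberEquiv f)).symm
  have h2 : (Cardinal.sum fun b : β => #(f ⁻¹' {b})) < Cardinal.prod fun _ : β => 𝔠 :=
    Cardinal.sum_lt_prod _ _ fun b => hcon b
  have h3 : (Cardinal.prod fun _ : β => 𝔠) = 𝔠 ^ #β := Cardinal.prod_const' β 𝔠
  have h4 : (𝔠 : Cardinal) ^ #β ≤ 𝔠 ^ (ℵ₀ : Cardinal) :=
    Cardinal.power_le_power_left Cardinal.continuum_ne_zero Cardinal.mk_le_aleph0
  have : (𝔠 : Cardinal) < 𝔠 := by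
    calc 𝔠 = #α := hα.symm
    _ < Cardinal.prod fun _ : β => 𝔠 := h1 ▸ h2
    _ = 𝔠 ^ #β := h3
    _ ≤ 𝔠 ^ (ℵ₀ : Cardinal) := h4
    _ = 𝔠 := Cardinal.continuum_power_aleph0
  exact absurd this (lt_irrefl _)

/-- Enumeration of ℚ by ℕ. -/
noncomputable def qe : ℕ → ℚ := fun n => (Denumerable.eqv ℚ).symm n

/-- The chain family: cuts of ℚ, coded as subsets of ℕ. -/
noncomputable def Acut (r : ℝ) : Set ℕ := {n | (qe n : ℝ) < r}

lemma qe_surj : Function.Surjective qe := (Denumerable.eqv ℚ).symm.surjective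

lemma Acut_mono {r r' : ℝ} (h : r ≤ r') : Acut r ⊆ Acut r' :=
  fun _ hn => lt_of_lt_of_le hn h

lemma infinite_pre {S : Set ℚ} (hS : S.Infinite) : {n : ℕ | qe n ∈ S}.Infinite := by
  have : (qe ⁻¹' S).Infinite :=
    hS.preimage (by rw [Set.range_eq_univ.mpr qe_surj]; exact subset_univ _)
  exact this

lemma Acut_gap {r r' : ℝ} (h : r < r') : (Acut r' \ Acut r).Infinite := by
  obtain ⟨q1, hq1, hq1'⟩ := exists_rat_btwn h
  obtain ⟨q2, hq2, hq2'⟩ := exists_rat_btwn hq1'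
  have hq12 : q1 < q2 := by exact_mod_cast hq2
  have hIoo : (Set.Ioo q1 q2).Infinite := Set.infinite_coe_iff.mp (Set.Ioo.infinite hq12)
  refine (infinite_pre hIoo).mono fun n hn => ?_
  obtain ⟨h1, h2⟩ := hn
  constructor
  · have : (qe n : ℝ) < (q2 : ℝ) := by exact_mod_cast h2
    exact this.trans hq2'
  · simp only [Acut, Set.mem_setOf_eq, not_lt]
    have : (q1 : ℝ) < (qe n : ℝ) := by exact_mod_cast h1
    exact le_of_lt (hq1.trans this)

lemma Acut_infinite (r : ℝ) : (Acut r).Infinite := by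
  obtain ⟨q1, hq1, hq1'⟩ := exists_rat_btwn (sub_one_lt r)
  refine (infinite_pre (Set.Iio_infinite q1)).mono fun n hn => ?_
  have : (qe n : ℝ) < (q1 : ℝ) := by exact_mod_cast hn
  exact this.trans hq1'

lemma Acut_compl_infinite (r : ℝ) : (Acut r)ᶜ.Infinite := by
  obtain ⟨q1, hq1, hq1'⟩ := exists_rat_btwn (lt_add_one r)
  refine (infinite_pre (Set.Ioi_infinite q1)).mono fun n hn => ?_
  have : (q1 : ℝ) < (qe n : ℝ) := by exact_mod_cast hn
  simp only [Acut, mem_compl_iff, Set.mem_setOf_eq, not_lt]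
  exact le_of_lt (hq1.trans this)

/-- Initial segments of a branch. -/
def seg (x : ℕ → Bool) (n : ℕ) : List Bool := List.ofFn fun i : Fin n => x i

lemma seg_length (x : ℕ → Bool) (n : ℕ) : (seg x n).length = n := by
  simp [seg]

lemma seg_succ (x : ℕ → Bool) (n : ℕ) : seg x (n + 1) = seg x n ++ [x n] := by
  simp only [seg, List.ofFn_succ', List.concat_eq_append]
  congr 1

/-- Branch codes: the almost disjoint family. -/
def Bfam (x : ℕ → Bool) : Set ℕ := Set.range fun n => Encodable.encode (seg x n)

lemma code_inj (x : ℕ → Bool) :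
    Function.Injective fun n => Encodable.encode (seg x n) := by
  intro a b h
  have h2 : seg x a = seg x b := Encodable.encode_injective h
  have := congrArg List.length h2
  simpa [seg_length] using this

lemma Bfam_infinite (x : ℕ → Bool) : (Bfam x).Infinite :=
  Set.infinite_range_of_injective (code_inj x)

lemma Bfam_compl_infinite (x : ℕ → Bool) : (Bfam x)ᶜ.Infinite := by
  have hbadinj : Function.Injective fun n => Encodable.encode (seg x n ++ [!(x n)]) := by
    intro a b h
    have h2 := Encodable.encode_injective h
    have := congrArg List.length h2
    simpa [seg_length] using this
  refine (Set.infinite_range_of_injective hbadinj).mono ?_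
  rintro _ ⟨n, rfl⟩
  simp only [Bfam, mem_compl_iff, Set.mem_range, not_exists]
  intro m hm
  have h2 : seg x m = seg x n ++ [!(x n)] := Encodable.encode_injective hm
  have hlen := congrArg List.length h2
  simp only [seg_length, List.length_append, List.length_cons, List.length_nil] at hlen
  subst hlen
  rw [seg_succ] at h2
  have := List.append_cancel_left h2
  simp at this

lemma Bfam_diff_infinite {x y : ℕ → Bool} (hxy : x ≠ y) : (Bfam x \ Bfam y).Infinite := by
  have hex : ∃ n, x n ≠ y n := by
    by_contra h
    push_neg at h
    exact hxy (funext h)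
  classical
  set n0 := Nat.find hex with hn0
  have hmem : ∀ n ∈ Set.Ioi n0, Encodable.encode (seg x n) ∈ Bfam x \ Bfam y := by
    intro n hn
    refine ⟨⟨n, rfl⟩, ?_⟩
    rintro ⟨m, hm⟩
    have h2 : seg y m = seg x n := Encodable.encode_injective hm
    have hlen : m = n := by simpa [seg_length] using congrArg List.length h2
    rw [hlen] at h2
    have h3 : (fun i : Fin n => y i) = fun i : Fin n => x i := List.ofFn_inj.mp h2
    have h4 : y n0 = x n0 := congrFun h3 ⟨n0, hn⟩
    exact Nat.find_spec hex h4.symm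
  have himg : ((fun n => Encodable.encode (seg x n)) '' Set.Ioi n0).Infinite :=
    (Set.Ioi_infinite n0).image ((code_inj x).injOn)
  exact himg.mono (by rintro _ ⟨n, hn, rfl⟩; exact hmem n hn)

end CutsetAux

open CutsetAux

/-- Every non-trivial cutset in 𝒫(ℕ) contains a chain of cardinality
2^{ℵ₀} as well as an antichain of cardinality 2^{ℵ₀}. -/
theorem cutset_nat_contains_chain_and_antichain_continuum (C : Set (Set ℕ))
    (hcut : ∀ M : Set (Set ℕ), IsMaxChain (· ⊆ ·) M → (C ∩ M).Nonempty)
    (huniv : Set.univ ∉ C) (hempty : ∅ ∉ C) :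
    (∃ 𝒜 ⊆ C, IsChain (· ⊆ ·) 𝒜 ∧ Cardinal.mk 𝒜 = 2 ^ Cardinal.aleph0) ∧
    (∃ ℬ ⊆ C, IsAntichain (· ⊆ ·) ℬ ∧ Cardinal.mk ℬ = 2 ^ Cardinal.aleph0) := by
  classical
  constructor
  · -- CHAIN
    have hchoice : ∀ r : ℝ, ∃ p : Set ℕ × Finset ℕ × Bool, p.1 ∈ C ∧
        ((p.2.2 = true ∧ p.1 = Acut r \ ↑p.2.1) ∨ (p.2.2 = false ∧ p.1 = Acut r ∪ ↑p.2.1)) := by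
      intro r
      obtain ⟨X, hXC, F, hF⟩ := exists_near C hcut huniv hempty (Acut r)
        (Acut_infinite r) (Acut_compl_infinite r)
      rcases hF with h | h
      · exact ⟨(X, F, true), hXC, Or.inl ⟨rfl, h⟩⟩
      · exact ⟨(X, F, false), hXC, Or.inr ⟨rfl, h⟩⟩
    choose φ hφC hφ using hchoice
    obtain ⟨c0, hc0⟩ := fiber_big (Cardinal.mk_real) (fun r => (φ r).2)
    set P : Set ℝ := (fun r => (φ r).2) ⁻¹' {c0} with hP
    set X : ℝ → Set ℕ := fun r => (φ r).1 with hX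
    have hcodeeq : ∀ r ∈ P, ∀ r' ∈ P, (φ r).2 = (φ r').2 := by
      intro r hr r' hr'
      have h1 : (φ r).2 = c0 := hr
      have h2 : (φ r').2 = c0 := hr'
      rw [h1, h2]
    have hcomp : ∀ r ∈ P, ∀ r' ∈ P, r ≤ r' → X r ⊆ X r' := by
      intro r hr r' hr' hle
      have hc := hcodeeq r hr r' hr'
      have hF : (φ r).2.1 = (φ r').2.1 := by rw [hc]
      have hb : (φ r).2.2 = (φ r').2.2 := by rw [hc]
      rcases hφ r with ⟨hb1, hx1⟩ | ⟨hb1, hx1⟩ <;> rcases hφ r' with ⟨hb2, hx2⟩ | ⟨hb2, hx2⟩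
      · show (φ r).1 ⊆ (φ r').1
        rw [hx1, hx2, ← hF]
        exact diff_subset_diff_left (Acut_mono hle)
      · rw [hb1, hb2] at hb; exact absurd hb (by simp)
      · rw [hb1, hb2] at hb; exact absurd hb (by simp)
      · show (φ r).1 ⊆ (φ r').1
        rw [hx1, hx2, ← hF]
        exact union_subset_union_left _ (Acut_mono hle)
    have hne : ∀ r ∈ P, ∀ r' ∈ P, r < r' → X r ≠ X r' := by
      intro r hr r' hr' hlt heq
      have hc := hcodeeq r hr r' hr'
      have hF : (φ r).2.1 = (φ r').2.1 := by rw [hc]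
      have hb : (φ r).2.2 = (φ r').2.2 := by rw [hc]
      have heq' : (φ r).1 = (φ r').1 := heq
      have hsub : Acut r' \ Acut r ⊆ ↑(φ r).2.1 := by
        rcases hφ r with ⟨hb1, hx1⟩ | ⟨hb1, hx1⟩ <;> rcases hφ r' with ⟨hb2, hx2⟩ | ⟨hb2, hx2⟩
        · intro z hz
          by_contra hzF
          have hz1 : z ∈ Acut r' \ ↑(φ r').2.1 := ⟨hz.1, by rw [← hF]; exact hzF⟩
          rw [← hx2, ← heq', hx1] at hz1
          exact hz.2 hz1.1
        · rw [hb1, hb2] at hb; exact absurd hb (by simp)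
        · rw [hb1, hb2] at hb; exact absurd hb (by simp)
        · intro z hz
          have hz1 : z ∈ Acut r' ∪ ↑(φ r').2.1 := Or.inl hz.1
          rw [← hx2, ← heq', hx1] at hz1
          rcases hz1 with h | h
          · exact absurd h hz.2
          · exact h
      exact ((φ r).2.1.finite_toSet).not_infinite ((Acut_gap hlt).mono hsub)
    have hinj : Set.InjOn X P := by
      intro r hr r' hr' heq
      by_contra hne'
      rcases lt_or_gt_of_ne hne' with h | h
      · exact hne r hr r' hr' h heq
      · exact hne r' hr' r hr h heq.symm
    refine ⟨X '' P, ?_, ?_, ?_⟩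
    · rintro _ ⟨r, _, rfl⟩; exact hφC r
    · rintro _ ⟨r, hr, rfl⟩ _ ⟨r', hr', rfl⟩ _
      rcases le_total r r' with h | h
      · exact Or.inl (hcomp r hr r' hr' h)
      · exact Or.inr (hcomp r' hr' r hr h)
    · rw [Cardinal.mk_image_eq_of_injOn X P hinj, Cardinal.two_power_aleph0]
      exact le_antisymm ((Cardinal.mk_set_le P).trans_eq Cardinal.mk_real) hc0
  · -- ANTICHAIN
    have hchoice : ∀ x : ℕ → Bool, ∃ p : Set ℕ × Set ℕ, p.1 ∈ C ∧ p.2.Finite ∧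
        Bfam x \ p.2 ⊆ p.1 ∧ p.1 ⊆ Bfam x ∪ p.2 := by
      intro x
      obtain ⟨X, hXC, F, hF⟩ := exists_near C hcut huniv hempty (Bfam x)
        (Bfam_infinite x) (Bfam_compl_infinite x)
      rcases hF with rfl | rfl
      · exact ⟨(Bfam x \ ↑F, ↑F), hXC, F.finite_toSet, subset_rfl,
          diff_subset.trans subset_union_left⟩
      · exact ⟨(Bfam x ∪ ↑F, ↑F), hXC, F.finite_toSet,
          diff_subset.trans subset_union_left, subset_rfl⟩
    choose ψ hψC hψF hψ1 hψ2 using hchoice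
    set Y : (ℕ → Bool) → Set ℕ := fun x => (ψ x).1 with hY
    have hkey : ∀ x y : ℕ → Bool, x ≠ y → ¬ Y x ⊆ Y y := by
      intro x y hxy hsub
      have hd : Bfam x \ Bfam y ⊆ (ψ x).2 ∪ (ψ y).2 := by
        intro z hz
        by_cases hzF : z ∈ (ψ x).2
        · exact Or.inl hzF
        · have h1 : z ∈ Y x := hψ1 x ⟨hz.1, hzF⟩
          have h2 : z ∈ Bfam y ∪ (ψ y).2 := hψ2 y (hsub h1)
          rcases h2 with h | h
          · exact absurd h hz.2
          · exact Or.inr h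
      exact ((hψF x).union (hψF y)).not_infinite ((Bfam_diff_infinite hxy).mono hd)
    have hYinj : Function.Injective Y := by
      intro x y h
      by_contra hne
      exact hkey x y hne (h ▸ subset_rfl)
    refine ⟨Set.range Y, ?_, ?_, ?_⟩
    · rintro _ ⟨x, rfl⟩; exact hψC x
    · rintro _ ⟨x, rfl⟩ _ ⟨y, rfl⟩ hne
      exact hkey x y (fun h => hne (by rw [h]))
    · rw [Cardinal.mk_range_eq Y hYinj, ← Cardinal.power_def Bool ℕ,
        Cardinal.mk_bool, Cardinal.mk_nat]
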